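/- arXiv:1112.6063 — 2 statements merged into one kernel-verified Lean document; each statement's English description precedes it below -/
import Mathlib

section
/- Let n ≥ 1, x ∈ {0,1}^n, 1 ≤ t ≤ n, and 0 ≤ l < ⌈log₂(t+1)⌉. Let s ∈ {0,…,2^l − 1} be the residue of the Hamming weight |x| modulo 2^l. Then TH_n^t(x) = 1 ⊕ (⊕_{k} EX_n^k(x)), where the XOR ranges over all 0 ≤ k ≤ t−1 with k ≡ s (mod 2^l). Moreover, the number of such k is at most t/2^l + 1. -/
/-- For `1 ≤ t ≤ n`, `0 ≤ l < ⌈log₂(t+1)⌉` and `x ∈ {0,1}^n`, with `s` the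
residue of `|x|` modulo `2^l`:
`TH_n^t(x) = 1 ⊕ (⊕_k EX_n^k(x))` where `k` ranges over `0 ≤ k ≤ t-1` with
`k ≡ s (mod 2^l)`; moreover the number of such `k` is at most `t/2^l + 1`.
XOR is addition in `ZMod 2`. -/
theorem stmt_15 (n t l : ℕ) (hn : 1 ≤ n) (ht1 : 1 ≤ t) (htn : t ≤ n)
    (hl : l < Nat.clog 2 (t + 1)) (x : Fin n → Bool) :
    ((if t ≤ ∑ j, (x j).toNat then (1 : ZMod 2) else 0) =
        1 + ∑ k ∈ (Finset.range t).filter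
              (fun k => k % 2 ^ l = (∑ j, (x j).toNat) % 2 ^ l),
            (if (∑ j, (x j).toNat) = k then (1 : ZMod 2) else 0)) ∧
      ((Finset.range t).filter
          (fun k => k % 2 ^ l = (∑ j, (x j).toNat) % 2 ^ l)).card ≤ t / 2 ^ l + 1 := by
  set w := ∑ j, (x j).toNat with hw
  constructor
  · have hsum : ∑ k ∈ (Finset.range t).filter (fun k => k % 2 ^ l = w % 2 ^ l),
        (if w = k then (1 : ZMod 2) else 0) = if w < t then 1 else 0 := by
      rw [Finset.sum_ite_eq]
      by_cases hwt : w < t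
      · simp [hwt]
      · simp [hwt]
    rw [hsum]
    by_cases hwt : t ≤ w
    · simp [hwt, not_lt.mpr hwt]
    · push_neg at hwt
      rw [if_neg (not_le.mpr hwt), if_pos hwt]
      decide
  · have h : ((Finset.range t).filter (fun k => k % 2 ^ l = w % 2 ^ l)).card ≤
        (Finset.range (t / 2 ^ l + 1)).card :=
      Finset.card_le_card_of_injOn (fun k => k / 2 ^ l) ?_ ?_
    · simpa using h
    · intro k hk
      simp only [Finset.mem_coe, Finset.mem_filter, Finset.mem_range] at hk ⊢
      exact Nat.lt_succ_of_le (Nat.div_le_div_right (le_of_lt hk.1))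
    · intro a ha b hb hab
      simp only [Finset.mem_coe, Finset.mem_filter] at ha hb
      have hab' : a / 2 ^ l = b / 2 ^ l := hab
      have hmod : a % 2 ^ l = b % 2 ^ l := ha.2.trans hb.2.symm
      calc a = 2 ^ l * (a / 2 ^ l) + a % 2 ^ l := (Nat.div_add_mod a _).symm
        _ = 2 ^ l * (b / 2 ^ l) + b % 2 ^ l := by rw [hab', hmod]
        _ = b := Nat.div_add_mod b _
end

section
/- For any n ≥ 1 and x = x_0⋯x_{n-1} ∈ {0,1}^n, e^{iπ·(1/2^{n-1})·Σ_{a ∈ {0,1}^n \ {0^n}} PA_n^a(x)} = (−1)^{OR_n(x)}, where PA_n^a(x) = ⊕_j a_j x_j ∈ {0,1} ⊂ ℝ and OR_n(x) ∈ {0,1} is the OR of the bits of x. -/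
lemma key_sum (n : ℕ) (hn : 1 ≤ n) (x : Fin n → Bool) (j0 : Fin n) (hj0 : x j0 = true) :
    ∑ a : Fin n → Bool, (((∑ j, (a j).toNat * (x j).toNat) % 2 : ℕ) : ℝ)
      = 2 ^ (n - 1) := by
  set f : (Fin n → Bool) → ℝ :=
    fun a => (((∑ j, (a j).toNat * (x j).toNat) % 2 : ℕ) : ℝ) with hf
  have hinv : Function.Involutive
      (fun a : Fin n → Bool => Function.update a j0 (!(a j0))) := by
    intro a
    funext j
    by_cases h : j = j0
    · subst h; simp
    · simp [Function.update_of_ne h]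
  set σ := hinv.toPerm with hσ
  have hflip : ∀ a : Fin n → Bool, f (σ a) = 1 - f a := by
    intro a
    have h1 : ∑ j, ((σ a) j).toNat * (x j).toNat
        = (!(a j0)).toNat * (x j0).toNat + ∑ j ∈ Finset.univ.erase j0, (a j).toNat * (x j).toNat := by
      rw [hσ]
      show ∑ j, (Function.update a j0 (!(a j0)) j).toNat * (x j).toNat = _
      rw [← Finset.add_sum_erase _ _ (Finset.mem_univ j0)]
      simp only [Function.update_self]
      congr 1
      apply Finset.sum_congr rfl
      intro j hj
      rw [Function.update_of_ne (Finset.ne_of_mem_erase hj)]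
    have h2 : ∑ j, (a j).toNat * (x j).toNat
        = (a j0).toNat * (x j0).toNat + ∑ j ∈ Finset.univ.erase j0, (a j).toNat * (x j).toNat :=
      (Finset.add_sum_erase _ _ (Finset.mem_univ j0)).symm
    set R := ∑ j ∈ Finset.univ.erase j0, (a j).toNat * (x j).toNat
    rw [hf]
    simp only [h1, h2, hj0, Bool.toNat_true, mul_one]
    cases ha : a j0 <;> simp only [Bool.not_true, Bool.not_false, Bool.toNat_true,
      Bool.toNat_false, zero_add, one_mul, zero_mul, mul_one]
    · have : (1 + R) % 2 = 1 - R % 2 := by omega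
      rw [this]
      have := Nat.mod_two_eq_zero_or_one R
      rcases this with h | h <;> simp [h]
    · have : R % 2 = 1 - (1 + R) % 2 := by omega
      rw [this]
      have := Nat.mod_two_eq_zero_or_one ((1 + R) % 2)
      rcases Nat.mod_two_eq_zero_or_one (1 + R) with h | h <;> simp [h]
  have hre : ∑ a : Fin n → Bool, f a = ∑ a : Fin n → Bool, f (σ a) :=
    (Equiv.sum_comp σ f).symm
  have h2s : (2 : ℝ) * ∑ a : Fin n → Bool, f a = 2 ^ n := by
    have : ∑ a : Fin n → Bool, f a + ∑ a : Fin n → Bool, f a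
        = ∑ a : Fin n → Bool, (1 : ℝ) := by
      nth_rewrite 2 [hre]
      rw [← Finset.sum_add_distrib]
      apply Finset.sum_congr rfl
      intro a _
      rw [hflip a]; ring
    rw [two_mul, this]
    simp [Finset.card_univ]
  have hcast : (2 : ℝ) ^ n = 2 * 2 ^ (n - 1) := by
    rw [← pow_succ']
    congr 1
    omega
  have h2 : (2 : ℝ) ≠ 0 := two_ne_zero
  have := h2s
  rw [hcast] at this
  exact mul_left_cancel₀ h2 this

/-- For `x ∈ {0,1}^n`,
`e^{iπ (1/2^{n-1}) Σ_{a ≠ 0^n} PA_n^a(x)} = (−1)^{OR_n(x)}`. -/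
theorem stmt_18 (n : ℕ) (hn : 1 ≤ n) (x : Fin n → Bool) :
    Complex.exp (Real.pi * Complex.I *
        (((1 / 2 ^ (n - 1) : ℝ)) *
          ∑ a ∈ Finset.univ.filter (fun a : Fin n → Bool => a ≠ (fun _ => false)),
            (((∑ j, (a j).toNat * (x j).toNat) % 2 : ℕ) : ℝ)))
      = (-1) ^ (if ∃ j, x j = true then 1 else 0 : ℕ) := by
  have hfilter : (Finset.univ.filter (fun a : Fin n → Bool => a ≠ (fun _ => false)))
      = Finset.univ.erase (fun _ => false) := by
    rw [Finset.filter_ne']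
  by_cases hx : ∃ j, x j = true
  · obtain ⟨j0, hj0⟩ := hx
    have hzero : (((∑ j : Fin n, ((fun _ : Fin n => false) j).toNat * (x j).toNat) % 2 : ℕ) : ℝ) = 0 := by
      simp
    have hsum : ∑ a ∈ Finset.univ.filter (fun a : Fin n → Bool => a ≠ (fun _ => false)),
        (((∑ j, (a j).toNat * (x j).toNat) % 2 : ℕ) : ℝ) = 2 ^ (n - 1) := by
      have h := Finset.add_sum_erase Finset.univ
        (fun a : Fin n → Bool => (((∑ j, (a j).toNat * (x j).toNat) % 2 : ℕ) : ℝ))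
        (Finset.mem_univ (fun _ => false))
      rw [hfilter]
      have h' : (fun a : Fin n → Bool => (((∑ j, (a j).toNat * (x j).toNat) % 2 : ℕ) : ℝ))
          (fun _ => false) = 0 := hzero
      rw [show (((∑ j, false.toNat * (x j).toNat) % 2 : ℕ) : ℝ) = 0 from hzero, zero_add] at h
      rw [h]
      exact key_sum n hn x j0 hj0
    rw [hsum]
    have : (1 / 2 ^ (n - 1) : ℝ) * 2 ^ (n - 1) = 1 := by
      field_simp
    rw [← Complex.ofReal_mul, this, Complex.ofReal_one, mul_one, Complex.exp_pi_mul_I,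
      if_pos ⟨j0, hj0⟩, pow_one]
  · have hxz : ∀ j, x j = false := by
      intro j
      cases h : x j
      · rfl
      · exact absurd ⟨j, h⟩ hx
    have hsum : ∑ a ∈ Finset.univ.filter (fun a : Fin n → Bool => a ≠ (fun _ => false)),
        (((∑ j, (a j).toNat * (x j).toNat) % 2 : ℕ) : ℝ) = 0 := by
      apply Finset.sum_eq_zero
      intro a _
      simp [hxz]
    rw [hsum, if_neg hx]
    simp
end
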